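/- A simple connected graph G with no odd cycle of length 5 or more, other than K₃, satisfies χ'(G) = Δ(G). Specifically, if G is connected, simple, contains no induced or non-induced odd cycle of length ≥ 5, and G ≠ K₃, then the chromatic index of G equals its maximum degree. -/

import Mathlib

set_option linter.unusedSectionVars false

namespace EC

open SimpleGraph

variable {V : Type*} [Fintype V] [DecidableEq V]

/-- Proper edge colouring with colours `< k` (on edges), in "star" form. -/
def Good (H : SimpleGraph V) (k : ℕ) (C : Sym2 V → ℕ) : Prop :=
  (∀ ⦃x y⦄, H.Adj x y → C s(x, y) < k) ∧
  ∀ ⦃x y z⦄, H.Adj x y → H.Adj x z → y ≠ z → C s(x, y) ≠ C s(x, z)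

lemma Good.unique {H : SimpleGraph V} {k : ℕ} {C : Sym2 V → ℕ} (hC : Good H k C)
    {x y z : V} (h1 : H.Adj x y) (h2 : H.Adj x z) (h : C s(x, y) = C s(x, z)) : y = z := by
  by_contra hne
  exact hC.2 h1 h2 hne h

/-- `a` is a colour missing at `u`. -/
def Miss (H : SimpleGraph V) (C : Sym2 V → ℕ) (u : V) (a : ℕ) : Prop :=
  ∀ ⦃z⦄, H.Adj u z → C s(u, z) ≠ a

/-- The subgraph consisting of edges coloured `a` or `b`. -/
def chain (H : SimpleGraph V) (C : Sym2 V → ℕ) (a b : ℕ) : SimpleGraph V where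
  Adj x y := H.Adj x y ∧ (C s(x, y) = a ∨ C s(x, y) = b)
  symm := Std.Symm.mk <| by
    intro x y ⟨h, hc⟩
    refine ⟨h.symm, ?_⟩
    rwa [Sym2.eq_swap]
  loopless := ⟨fun x ⟨h, _⟩ => h.ne rfl⟩

lemma chain_adj {H : SimpleGraph V} {C : Sym2 V → ℕ} {a b : ℕ} {x y : V} :
    (chain H C a b).Adj x y ↔ H.Adj x y ∧ (C s(x, y) = a ∨ C s(x, y) = b) := Iff.rfl

lemma chain_le {H : SimpleGraph V} {C : Sym2 V → ℕ} {a b : ℕ} : chain H C a b ≤ H :=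
  fun _ _ h => h.1

/-- the "other colour" operation. -/
def oc (a b d : ℕ) : ℕ := if d = a then b else a

lemma oc_a {a b : ℕ} : oc a b a = b := if_pos rfl
lemma oc_b {a b : ℕ} (hab : a ≠ b) : oc a b b = a := if_neg (Ne.symm hab)
lemma oc_mem {a b d : ℕ} : oc a b d = a ∨ oc a b d = b := by
  unfold oc; split <;> simp
lemma oc_oc {a b d : ℕ} (hab : a ≠ b) (hd : d = a ∨ d = b) : oc a b (oc a b d) = d := by
  rcases hd with rfl | rfl
  · rw [oc_a, oc_b hab]
  · rw [oc_b hab, oc_a]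

/-- Alternating colour predicate along a walk. -/
def Alt {S : SimpleGraph V} (C : Sym2 V → ℕ) (f : ℕ → ℕ) :
    ∀ {w v : V}, S.Walk w v → ℕ → Prop
  | _, _, SimpleGraph.Walk.nil, _ => True
  | _, _, SimpleGraph.Walk.cons (u := x) (v := y) _ q, col =>
      C s(x, y) = col ∧ Alt C f q (f col)

lemma alt_nil {S : SimpleGraph V} {C : Sym2 V → ℕ} {f : ℕ → ℕ} {w : V} {col : ℕ} :
    Alt C f (SimpleGraph.Walk.nil : S.Walk w w) col := trivial

lemma alt_cons {S : SimpleGraph V} {C : Sym2 V → ℕ} {f : ℕ → ℕ} {x y v : V}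
    {h : S.Adj x y} {q : S.Walk y v} {col : ℕ} :
    Alt C f (SimpleGraph.Walk.cons h q) col ↔ C s(x, y) = col ∧ Alt C f q (f col) := Iff.rfl

/-- A path in the two-coloured subgraph, starting at a vertex missing the
colour `oc a b col` (when the first edge is supposed to have colour `col`),
alternates colours. -/
lemma alt_of {H : SimpleGraph V} {k : ℕ} {C : Sym2 V → ℕ} {a b : ℕ}
    (hC : Good H k C) (hab : a ≠ b) :
    ∀ {w v : V} (p : (chain H C a b).Walk w v), p.IsPath →
      ∀ col, (col = a ∨ col = b) →
      (∀ ⦃z⦄, H.Adj w z → C s(w, z) = oc a b col → z ∉ p.support) →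
      Alt C (oc a b) p col := by
  intro w v p
  induction p with
  | nil => intro _ col _ _; exact alt_nil
  | @cons w y v h q ih =>
    intro hp col hcol hinv
    obtain ⟨hH, hcc⟩ := id h
    have hy : y ∈ (SimpleGraph.Walk.cons h q).support := by
      simp [SimpleGraph.Walk.support_cons]
    have hfe : C s(w, y) = col := by
      by_cases hoc : C s(w, y) = oc a b col
      · exact absurd hy (hinv hH hoc)
      · rcases hcol with rfl | rfl
        · rcases hcc with h1 | h1
          · exact h1
          · exact absurd (h1.trans (oc_a (a := col) (b := b)).symm) hoc
        · rcases hcc with h1 | h1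
          · exact absurd (h1.trans (oc_b hab).symm) hoc
          · exact h1
    refine alt_cons.mpr ⟨hfe, ?_⟩
    have hq : q.IsPath := hp.of_cons
    refine ih hq (oc a b col) oc_mem ?_
    intro z hz hcz hzin
    rw [oc_oc hab hcol] at hcz
    by_cases hzw : z = w
    · subst hzw
      exact ((SimpleGraph.Walk.cons_isPath_iff h q).mp hp).2 hzin
    · have : C s(y, w) = C s(y, z) := by
        rw [Sym2.eq_swap (a := y) (b := w)]
        rw [hfe, hcz]
      exact hzw (hC.unique hH.symm hz this).symm

/-- The last edge of a nonempty alternating walk. -/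
lemma alt_last {H : SimpleGraph V} {C : Sym2 V → ℕ} {a b : ℕ} (hab : a ≠ b) :
    ∀ {w v : V} (p : (chain H C a b).Walk w v), 0 < p.length →
      ∀ col, (col = a ∨ col = b) → Alt C (oc a b) p col →
      ∃ z, (chain H C a b).Adj z v ∧ s(z, v) ∈ p.edges ∧
        C s(z, v) = (if Even p.length then oc a b col else col) := by
  intro w v p
  induction p with
  | nil => intro h; exact absurd h (by simp)
  | @cons w y v h q ih =>
    intro _ col hcol halt
    obtain ⟨hfe, halt'⟩ := alt_cons.mp halt
    cases q with
    | nil =>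
      refine ⟨w, h, by simp, ?_⟩
      simp only [SimpleGraph.Walk.length_cons, SimpleGraph.Walk.length_nil]
      simp only [show ¬ Even (0 + 1) by decide, if_false]
      exact hfe
    | cons h' q' =>
      obtain ⟨z, hz1, hz2, hz3⟩ :=
        ih (by simp) (oc a b col) oc_mem halt'
      refine ⟨z, hz1, by rw [SimpleGraph.Walk.edges_cons]; exact List.mem_cons_of_mem _ hz2, ?_⟩
      rw [hz3]
      have hl : (SimpleGraph.Walk.cons h (SimpleGraph.Walk.cons h' q')).length
          = (SimpleGraph.Walk.cons h' q').length + 1 := by simp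
      rw [hl]
      by_cases hE : Even (SimpleGraph.Walk.cons h' q').length
      · rw [if_pos hE, if_neg (by rw [Nat.even_add_one]; exact not_not_intro hE), oc_oc hab hcol]
      · rw [if_neg hE, if_pos (by rw [Nat.even_add_one]; exact hE)]

/-- `Alt` restricts to prefixes. -/
lemma alt_prefix {S : SimpleGraph V} {C : Sym2 V → ℕ} {f : ℕ → ℕ} :
    ∀ {w v x : V} (q : S.Walk w v) (r : S.Walk v x) {col : ℕ},
      Alt C f (q.append r) col → Alt C f q col := by
  intro w v x q
  induction q with
  | nil => intro r col _; exact alt_nil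
  | cons h q ih =>
    intro r col halt
    rw [SimpleGraph.Walk.cons_append] at halt
    obtain ⟨h1, h2⟩ := alt_cons.mp halt
    exact alt_cons.mpr ⟨h1, ih r h2⟩

/-- walk of length 2: extract the middle vertex. -/
lemma length_two_struct {S : SimpleGraph V} {u v : V} (p : S.Walk u v) (hl : p.length = 2) :
    ∃ (x : V) (h1 : S.Adj u x) (h2 : S.Adj x v),
      p = SimpleGraph.Walk.cons h1 (SimpleGraph.Walk.cons h2 SimpleGraph.Walk.nil) := by
  cases p with
  | nil => simp at hl
  | cons h q =>
    cases q with
    | nil => simp at hl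
    | cons h' q' =>
      cases q' with
      | nil => exact ⟨_, h, h', rfl⟩
      | cons h'' q'' => simp only [SimpleGraph.Walk.length_cons] at hl; omega

lemma isPath_concat {S : SimpleGraph V} {u v w : V} {p : S.Walk u v} (hp : p.IsPath)
    (h : S.Adj v w) (hw : w ∉ p.support) : (p.concat h).IsPath := by
  rw [SimpleGraph.Walk.isPath_def, SimpleGraph.Walk.support_concat,
    List.nodup_append]
  exact ⟨hp.support_nodup, List.nodup_singleton w,
    fun x hx _ hx' hxy => by simp at hx'; subst hx'; subst hxy; exact hw hx⟩

lemma end_not_mem_takeUntil {S : SimpleGraph V} {u x v : V} (p : S.Walk u x) (hp : p.IsPath)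
    (hv : v ∈ p.support) (hvx : v ≠ x) : x ∉ (p.takeUntil v hv).support := by
  intro hxin
  have hnd : p.support.Nodup := hp.support_nodup
  rw [← p.take_spec hv, SimpleGraph.Walk.support_append] at hnd
  have hxr : x ∈ (p.dropUntil v hv).support.tail := by
    have hxr' : x ∈ (p.dropUntil v hv).support := SimpleGraph.Walk.end_mem_support _
    rw [SimpleGraph.Walk.support_eq_cons] at hxr'
    rcases List.mem_cons.mp hxr' with h | h
    · exact absurd h.symm hvx
    · exact h
  exact (List.disjoint_of_nodup_append hnd) hxin hxr

end EC

namespace EC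

open SimpleGraph

variable {V : Type*} [Fintype V] [DecidableEq V]

open scoped Classical

/-- Kempe swap of colours `a`, `c` on the component of `u`. -/
noncomputable def swapC (H : SimpleGraph V) (C : Sym2 V → ℕ) (a c : ℕ) (u : V) :
    Sym2 V → ℕ := fun e =>
  haveI := Classical.propDecidable
    (e ∈ (chain H C a c).edgeSet ∧ ∃ x ∈ e, (chain H C a c).Reachable u x)
  if e ∈ (chain H C a c).edgeSet ∧ ∃ x ∈ e, (chain H C a c).Reachable u x
  then (if C e = a then c else a) else C e

lemma swap_cond_iff {H : SimpleGraph V} {C : Sym2 V → ℕ} {a c : ℕ} {u : V} {x y : V}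
    (hxy : H.Adj x y) :
    (s(x, y) ∈ (chain H C a c).edgeSet ∧ ∃ z ∈ s(x, y), (chain H C a c).Reachable u z) ↔
      ((C s(x, y) = a ∨ C s(x, y) = c) ∧ (chain H C a c).Reachable u x) := by
  constructor
  · rintro ⟨hset, z, hz, hr⟩
    have hadj : (chain H C a c).Adj x y := (SimpleGraph.mem_edgeSet _).mp hset
    refine ⟨hadj.2, ?_⟩
    rcases Sym2.mem_iff.mp hz with rfl | rfl
    · exact hr
    · exact hr.trans hadj.symm.reachable
  · rintro ⟨hcol, hrx⟩
    exact ⟨(SimpleGraph.mem_edgeSet _).mpr ⟨hxy, hcol⟩, x, Sym2.mem_mk_left x y, hrx⟩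

lemma swap_adj {H : SimpleGraph V} {C : Sym2 V → ℕ} {a c : ℕ} {u : V} {x y : V}
    (hxy : H.Adj x y) :
    swapC H C a c u s(x, y) =
      if (C s(x, y) = a ∨ C s(x, y) = c) ∧ (chain H C a c).Reachable u x
      then (if C s(x, y) = a then c else a) else C s(x, y) := by
  unfold swapC
  by_cases h : (C s(x, y) = a ∨ C s(x, y) = c) ∧ (chain H C a c).Reachable u x
  · rw [if_pos ((swap_cond_iff hxy).mpr h), if_pos h]
  · rw [if_neg (fun hh => h ((swap_cond_iff hxy).mp hh)), if_neg h]

lemma swap_good {H : SimpleGraph V} {k : ℕ} {C : Sym2 V → ℕ} {a c : ℕ} {u : V}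
    (hC : Good H k C) (ha : a < k) (hc : c < k) (hac : a ≠ c) :
    Good H k (swapC H C a c u) := by
  constructor
  · intro x y hxy
    rw [swap_adj hxy]
    split_ifs
    · exact hc
    · exact ha
    · exact hC.1 hxy
  · intro x y z h1 h2 hyz heq
    rw [swap_adj h1, swap_adj h2] at heq
    have hne : C s(x, y) ≠ C s(x, z) := hC.2 h1 h2 hyz
    by_cases p1 : (C s(x, y) = a ∨ C s(x, y) = c) ∧ (chain H C a c).Reachable u x
    · by_cases p2 : (C s(x, z) = a ∨ C s(x, z) = c) ∧ (chain H C a c).Reachable u x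
      · rw [if_pos p1, if_pos p2] at heq
        rcases p1.1 with e1 | e1 <;> rcases p2.1 with e2 | e2
        · exact hne (e1.trans e2.symm)
        · rw [e1, e2, if_pos rfl, if_neg (fun h => hac h.symm)] at heq
          exact hac heq.symm
        · rw [e1, e2, if_neg (fun h => hac h.symm), if_pos rfl] at heq
          exact hac heq
        · exact hne (e1.trans e2.symm)
      · rw [if_pos p1, if_neg p2] at heq
        have hno : ¬ (C s(x, z) = a ∨ C s(x, z) = c) := fun hcols => p2 ⟨hcols, p1.2⟩
        by_cases hd : C s(x, y) = a
        · rw [if_pos hd] at heq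
          exact hno (Or.inr heq.symm)
        · rw [if_neg hd] at heq
          exact hno (Or.inl heq.symm)
    · by_cases p2 : (C s(x, z) = a ∨ C s(x, z) = c) ∧ (chain H C a c).Reachable u x
      · rw [if_neg p1, if_pos p2] at heq
        have hno : ¬ (C s(x, y) = a ∨ C s(x, y) = c) := fun hcols => p1 ⟨hcols, p2.2⟩
        by_cases hd : C s(x, z) = a
        · rw [if_pos hd] at heq
          exact hno (Or.inr heq)
        · rw [if_neg hd] at heq
          exact hno (Or.inl heq)
      · rw [if_neg p1, if_neg p2] at heq
        exact hne heq

/-- edges at a vertex not reachable from `u` are untouched. -/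
lemma swap_eq_at {H : SimpleGraph V} {C : Sym2 V → ℕ} {a c : ℕ} {u : V} {y z : V}
    (hy : ¬ (chain H C a c).Reachable u y) (hyz : H.Adj y z) :
    swapC H C a c u s(y, z) = C s(y, z) := by
  rw [swap_adj hyz, if_neg (fun h => hy h.2)]

/-- after swapping, `u` misses `c` (it missed `a` before). -/
lemma swap_miss {H : SimpleGraph V} {C : Sym2 V → ℕ} {a c : ℕ} {u : V}
    (hac : a ≠ c) (hmiss : Miss H C u a) : Miss H (swapC H C a c u) u c := by
  intro z hz
  rw [swap_adj hz]
  split_ifs with h1 h2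
  · exact absurd h2 (hmiss hz)
  · exact hac
  · intro hcc
    exact h1 ⟨Or.inr hcc, SimpleGraph.Reachable.refl u⟩

/-- an edge with colour outside `{a,c}` is untouched. -/
lemma swap_eq_of_color {H : SimpleGraph V} {C : Sym2 V → ℕ} {a c : ℕ} {u : V} {x y : V}
    (hxy : H.Adj x y) (h1 : C s(x, y) ≠ a) (h2 : C s(x, y) ≠ c) :
    swapC H C a c u s(x, y) = C s(x, y) := by
  rw [swap_adj hxy, if_neg (fun h => by rcases h.1 with h | h; exacts [h1 h, h2 h])]

end EC

namespace EC

open SimpleGraph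

variable {V : Type*} [Fintype V] [DecidableEq V]

/-- `G` minus the edge `uv`. -/
def erase (G : SimpleGraph V) (u v : V) : SimpleGraph V where
  Adj x y := G.Adj x y ∧ s(x, y) ≠ s(u, v)
  symm := Std.Symm.mk <| by
    intro x y ⟨h1, h2⟩
    refine ⟨h1.symm, ?_⟩
    rwa [Sym2.eq_swap]
  loopless := ⟨fun x h => h.1.ne rfl⟩

lemma erase_le {G : SimpleGraph V} {u v : V} : erase G u v ≤ G := fun _ _ h => h.1

/-- Closing a long even path into a short odd cycle is impossible. -/
lemma cycle_contra {G : SimpleGraph V}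
    (hodd : ∀ x (w : G.Walk x x), w.IsCycle → Odd w.length → w.length = 3)
    {S : SimpleGraph V} (hle : S ≤ G) {x y : V} (p : S.Walk x y) (hp : p.IsPath)
    (hadj : G.Adj y x) (hne : s(y, x) ∉ p.edges) (hEven : Even p.length)
    (hlen : 4 ≤ p.length) : False := by
  have hsub : ∀ e ∈ p.edges, e ∈ G.edgeSet :=
    fun e he => SimpleGraph.edgeSet_mono hle (p.edges_subset_edgeSet he)
  have hpG : (p.transfer G hsub).IsPath := hp.transfer _
  have hcyc : (SimpleGraph.Walk.cons hadj (p.transfer G hsub)).IsCycle := by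
    rw [SimpleGraph.Walk.cons_isCycle_iff]
    refine ⟨hpG, ?_⟩
    rw [SimpleGraph.Walk.edges_transfer]
    exact hne
  have hodd' : Odd (SimpleGraph.Walk.cons hadj (p.transfer G hsub)).length := by
    rw [SimpleGraph.Walk.length_cons, SimpleGraph.Walk.length_transfer]
    exact Even.add_one hEven
  have h3 := hodd _ _ hcyc hodd'
  rw [SimpleGraph.Walk.length_cons, SimpleGraph.Walk.length_transfer] at h3
  omega

/-- Extension of a colouring by one more edge. -/
def extendC (C : Sym2 V → ℕ) (u v : V) (b : ℕ) : Sym2 V → ℕ :=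
  fun e => if e = s(u, v) then b else C e

lemma extend_good {G : SimpleGraph V} {u v : V} {k b : ℕ} (huv : G.Adj u v)
    {C : Sym2 V → ℕ} (hC : Good (erase G u v) k C) (hb : b < k)
    (hMu : Miss (erase G u v) C u b) (hMv : Miss (erase G u v) C v b) :
    Good G k (extendC C u v b) := by
  constructor
  · intro x y hxy
    unfold extendC
    split_ifs with h
    · exact hb
    · exact hC.1 ⟨hxy, h⟩
  · intro x y z h1 h2 hyz
    unfold extendC
    by_cases e1 : s(x, y) = s(u, v) <;> by_cases e2 : s(x, z) = s(u, v)
    · exact absurd (Sym2.congr_right.mp (e1.trans e2.symm)) hyz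
    · rw [if_pos e1, if_neg e2]
      have hxz : (erase G u v).Adj x z := ⟨h2, e2⟩
      rcases Sym2.eq_iff.mp e1 with ⟨rfl, rfl⟩ | ⟨rfl, rfl⟩
      · exact fun h => hMu hxz h.symm
      · exact fun h => (hMv hxz) h.symm
    · rw [if_neg e1, if_pos e2]
      have hxy' : (erase G u v).Adj x y := ⟨h1, e1⟩
      rcases Sym2.eq_iff.mp e2 with ⟨rfl, rfl⟩ | ⟨rfl, rfl⟩
      · exact hMu hxy'
      · exact hMv hxy'
    · rw [if_neg e1, if_neg e2]
      exact hC.2 ⟨h1, e1⟩ ⟨h2, e2⟩ hyz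

/-- Try to extend using the missing pair `(a, b)`; either we succeed, or we find the
forced triangle configuration. -/
lemma attemptPair {G : SimpleGraph V} {k : ℕ}
    (hodd : ∀ x (w : G.Walk x x), w.IsCycle → Odd w.length → w.length = 3)
    {u v : V} (huv : G.Adj u v) {C : Sym2 V → ℕ} (hC : Good (erase G u v) k C)
    {a b : ℕ} (ha : a < k) (hb : b < k) (hab : a ≠ b)
    (hMa : Miss (erase G u v) C u a) (hMb : Miss (erase G u v) C v b) :
    (∃ C', Good G k C') ∨
      (∃ x, (erase G u v).Adj u x ∧ (erase G u v).Adj x v ∧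
        C s(u, x) = b ∧ C s(x, v) = a) := by
  by_cases hreach : (chain (erase G u v) C a b).Reachable u v
  · obtain ⟨p0⟩ := hreach
    obtain ⟨p, hp⟩ : ∃ p : (chain (erase G u v) C a b).Walk u v, p.IsPath :=
      ⟨p0.toPath.1, p0.toPath.2⟩
    have hAlt : Alt C (oc a b) p b :=
      alt_of hC hab p hp b (Or.inr rfl)
        (fun z hz hcz _ => absurd (by rwa [oc_b hab] at hcz) (hMa hz))
    have hlen0 : p.length ≠ 0 := fun h0 => huv.ne (SimpleGraph.Walk.eq_of_length_eq_zero h0)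
    obtain ⟨z, hzadj, hzmem, hzcol⟩ :=
      alt_last hab p (Nat.pos_of_ne_zero hlen0) b (Or.inr rfl) hAlt
    have hMbz : C s(z, v) ≠ b := by
      have := hMb hzadj.1.symm
      rwa [Sym2.eq_swap] at this
    have hEv : Even p.length := by
      by_contra hodd'
      rw [if_neg hodd'] at hzcol
      exact hMbz hzcol
    by_cases h2 : p.length = 2
    · right
      obtain ⟨x, h1, h2', hpe⟩ := length_two_struct p h2
      have hA := hAlt
      rw [hpe] at hA
      obtain ⟨hc1, hc2⟩ := alt_cons.mp hA
      obtain ⟨hc2', -⟩ := alt_cons.mp hc2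
      rw [oc_b hab] at hc2'
      exact ⟨x, h1.1, h2'.1, hc1, hc2'⟩
    · exfalso
      refine cycle_contra hodd (le_trans chain_le erase_le) p hp huv.symm ?_ hEv ?_
      · intro hmem
        have hSadj : (chain (erase G u v) C a b).Adj v u :=
          (SimpleGraph.mem_edgeSet _).mp (p.edges_subset_edgeSet hmem)
        exact hSadj.1.2 (Sym2.eq_swap)
      · obtain ⟨m, hm⟩ := hEv
        omega
  · left
    refine ⟨extendC (swapC (erase G u v) C a b u) u v b,
      extend_good huv (swap_good hC ha hb hab) hb (swap_miss hab hMa) ?_⟩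
    intro z hz hcc
    rw [swap_eq_at hreach hz] at hcc
    exact hMb hz hcc

/-- In the stuck configuration, `x` is not reachable from `u` in the `(a,c)`-chain graph. -/
lemma noReach {G : SimpleGraph V} {k : ℕ}
    (hodd : ∀ x (w : G.Walk x x), w.IsCycle → Odd w.length → w.length = 3)
    {u v : V} (huv : G.Adj u v) {C : Sym2 V → ℕ} (hC : Good (erase G u v) k C)
    {x : V} (hux : (erase G u v).Adj u x) (hxv : (erase G u v).Adj x v)
    {a b c : ℕ} (hcb : C s(u, x) = b) (hca : C s(x, v) = a)
    (hMa : Miss (erase G u v) C u a)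
    (hab : a ≠ b) (hac : a ≠ c) (hbc : b ≠ c) :
    ¬ (chain (erase G u v) C a c).Reachable u x := by
  intro hr
  obtain ⟨p0⟩ := hr
  obtain ⟨p, hp⟩ : ∃ p : (chain (erase G u v) C a c).Walk u x, p.IsPath :=
    ⟨p0.toPath.1, p0.toPath.2⟩
  have hAlt : Alt C (oc a c) p c :=
    alt_of hC hac p hp c (Or.inr rfl)
      (fun z hz hcz _ => absurd (by rwa [oc_b hac] at hcz) (hMa hz))
  have hlen0 : p.length ≠ 0 := fun h0 => hux.ne (SimpleGraph.Walk.eq_of_length_eq_zero h0)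
  by_cases hv : v ∈ p.support
  · -- the path passes through v
    have hvx : v ≠ x := (hxv.ne).symm
    have hqp : (p.takeUntil v hv).IsPath := hp.takeUntil hv
    have hAq : Alt C (oc a c) (p.takeUntil v hv) c := by
      have hA := hAlt
      rw [← p.take_spec hv] at hA
      exact alt_prefix _ _ hA
    have hxq : x ∉ (p.takeUntil v hv).support := end_not_mem_takeUntil p hp hv hvx
    have hql0 : (p.takeUntil v hv).length ≠ 0 :=
      fun h0 => huv.ne (SimpleGraph.Walk.eq_of_length_eq_zero h0)
    obtain ⟨z, hz1, hz2, hz3⟩ :=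
      alt_last hac (p.takeUntil v hv) (Nat.pos_of_ne_zero hql0) c (Or.inr rfl) hAq
    by_cases hE : Even (p.takeUntil v hv).length
    · rw [if_pos hE, oc_b hac] at hz3
      have hvz : C s(v, z) = a := by rw [Sym2.eq_swap]; exact hz3
      have hvx' : C s(v, x) = a := by rw [Sym2.eq_swap]; exact hca
      have hzx : z = x := hC.unique hz1.1.symm hxv.symm (hvz.trans hvx'.symm)
      rw [hzx] at hz2
      exact hxq (SimpleGraph.Walk.fst_mem_support_of_mem_edges _ hz2)
    · have hql1 : (p.takeUntil v hv).length ≠ 1 := by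
        intro h1
        have hadj := SimpleGraph.Walk.adj_of_length_eq_one h1
        exact hadj.1.2 rfl
      have hSvx : (chain (erase G u v) C a c).Adj v x :=
        ⟨hxv.symm, by rw [Sym2.eq_swap]; exact Or.inl hca⟩
      have hq' : ((p.takeUntil v hv).concat hSvx).IsPath := isPath_concat hqp hSvx hxq
      refine cycle_contra hodd (le_trans chain_le erase_le) ((p.takeUntil v hv).concat hSvx)
        hq' hux.1.symm ?_ ?_ ?_
      · intro hmem
        rw [SimpleGraph.Walk.edges_concat, List.concat_eq_append, List.mem_append,
          List.mem_singleton] at hmem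
        rcases hmem with hmem | hmem
        · have hSadj : (chain (erase G u v) C a c).Adj x u :=
            (SimpleGraph.mem_edgeSet _).mp ((p.takeUntil v hv).edges_subset_edgeSet hmem)
          have hcc := hSadj.2
          rw [Sym2.eq_swap] at hcc
          rcases hcc with hcc | hcc
          · exact hab (hcc.symm.trans hcb)
          · exact hbc (hcb.symm.trans hcc)
        · rcases Sym2.eq_iff.mp hmem with ⟨h1, h2⟩ | ⟨h1, h2⟩
          · exact hxv.ne h1
          · exact huv.ne h2
      · rw [SimpleGraph.Walk.length_concat, Nat.even_add_one]
        exact hE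
      · rw [SimpleGraph.Walk.length_concat]
        obtain ⟨m, hm⟩ := Nat.not_even_iff_odd.mp hE
        omega
  · -- the path avoids v
    obtain ⟨z, hz1, hz2, hz3⟩ :=
      alt_last hac p (Nat.pos_of_ne_zero hlen0) c (Or.inr rfl) hAlt
    by_cases hE : Even p.length
    · rw [if_pos hE, oc_b hac] at hz3
      have hxz : C s(x, z) = a := by rw [Sym2.eq_swap]; exact hz3
      have hzv : z = v := hC.unique hz1.1.symm hxv (hxz.trans hca.symm)
      rw [hzv] at hz2
      exact hv (SimpleGraph.Walk.fst_mem_support_of_mem_edges _ hz2)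
    · have hpl1 : p.length ≠ 1 := by
        intro h1
        have hadj := SimpleGraph.Walk.adj_of_length_eq_one h1
        rcases hadj.2 with hcc | hcc
        · exact hab (hcc.symm.trans hcb)
        · exact hbc (hcb.symm.trans hcc)
      have hSxv : (chain (erase G u v) C a c).Adj x v := ⟨hxv, Or.inl hca⟩
      have hp' : (p.concat hSxv).IsPath := isPath_concat hp hSxv hv
      refine cycle_contra hodd (le_trans chain_le erase_le) (p.concat hSxv) hp'
        huv.symm ?_ ?_ ?_
      · intro hmem
        rw [SimpleGraph.Walk.edges_concat, List.concat_eq_append, List.mem_append,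
          List.mem_singleton] at hmem
        rcases hmem with hmem | hmem
        · have hSadj : (chain (erase G u v) C a c).Adj v u :=
            (SimpleGraph.mem_edgeSet _).mp (p.edges_subset_edgeSet hmem)
          exact hSadj.1.2 (Sym2.eq_swap)
        · rcases Sym2.eq_iff.mp hmem with ⟨h1, h2⟩ | ⟨h1, h2⟩
          · exact huv.ne h2
          · exact hux.ne h2
      · rw [SimpleGraph.Walk.length_concat, Nat.even_add_one]
        exact hE
      · rw [SimpleGraph.Walk.length_concat]
        obtain ⟨m, hm⟩ := Nat.not_even_iff_odd.mp hE
        omega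

end EC

namespace EC

open SimpleGraph

variable {V : Type*} [Fintype V] [DecidableEq V]

lemma good_of_no_edges {G : SimpleGraph V} [DecidableRel G.Adj] {k : ℕ}
    (h : G.edgeFinset.card = 0) : ∃ C : Sym2 V → ℕ, Good G k C := by
  have hno : ∀ x y, ¬ G.Adj x y := by
    intro x y hadjx
    have hne : s(x, y) ∈ G.edgeFinset := by
      rw [SimpleGraph.mem_edgeFinset]
      exact (SimpleGraph.mem_edgeSet _).mpr hadjx
    rw [Finset.card_eq_zero.mp h] at hne
    exact absurd hne (Finset.notMem_empty _)
  exact ⟨fun _ => 0, fun x y hxy => absurd hxy (hno x y),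
    fun x y z hxy _ _ => absurd hxy (hno x y)⟩

lemma erase_neighborFinset_fst {G : SimpleGraph V} [DecidableRel G.Adj] {u v : V} :
    haveI : DecidableRel (erase G u v).Adj := fun x y =>
      inferInstanceAs (Decidable (G.Adj x y ∧ s(x, y) ≠ s(u, v)))
    (erase G u v).neighborFinset u = (G.neighborFinset u).erase v := by
  ext z
  simp only [SimpleGraph.mem_neighborFinset, Finset.mem_erase]
  constructor
  · rintro ⟨h1, h2⟩
    exact ⟨fun hzv => h2 (by rw [hzv]), h1⟩
  · rintro ⟨h1, h2⟩
    exact ⟨h2, fun hh => h1 (Sym2.congr_right.mp hh)⟩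

lemma erase_neighborFinset_snd {G : SimpleGraph V} [DecidableRel G.Adj] {u v : V} :
    haveI : DecidableRel (erase G u v).Adj := fun x y =>
      inferInstanceAs (Decidable (G.Adj x y ∧ s(x, y) ≠ s(u, v)))
    (erase G u v).neighborFinset v = (G.neighborFinset v).erase u := by
  ext z
  simp only [SimpleGraph.mem_neighborFinset, Finset.mem_erase]
  constructor
  · rintro ⟨h1, h2⟩
    exact ⟨fun hzu => h2 (by rw [hzu, Sym2.eq_swap]), h1⟩
  · rintro ⟨h1, h2⟩
    refine ⟨h2, fun hh => h1 ?_⟩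
    rw [Sym2.eq_swap] at hh
    exact Sym2.congr_left.mp hh

lemma exists_missing {H : SimpleGraph V} [DecidableRel H.Adj] {k : ℕ} {C : Sym2 V → ℕ}
    {x : V} (hx : H.degree x < k) : ∃ a, a < k ∧ Miss H C x a := by
  classical
  set A := (H.neighborFinset x).image (fun z => C s(x, z)) with hA
  have hAcard : A.card < k := by
    refine lt_of_le_of_lt Finset.card_image_le ?_
    exact hx
  have hns : ¬ (Finset.range k ⊆ A) := fun hsub => by
    have := Finset.card_le_card hsub
    rw [Finset.card_range] at this
    omega
  obtain ⟨a, ha1, ha2⟩ := Finset.not_subset.mp hns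
  refine ⟨a, Finset.mem_range.mp ha1, fun z hz hcz => ha2 ?_⟩
  rw [hA]
  exact Finset.mem_image.mpr ⟨z, by rw [SimpleGraph.mem_neighborFinset]; exact hz, hcz⟩

lemma key (k : ℕ) : ∀ (n : ℕ) (G : SimpleGraph V) [DecidableRel G.Adj],
    G.edgeFinset.card ≤ n →
    (∀ x (w : G.Walk x x), w.IsCycle → Odd w.length → w.length = 3) →
    (∀ x, G.degree x ≤ k) →
    ((∃ x y z, G.Adj x y ∧ G.Adj y z ∧ G.Adj x z) → 3 ≤ k) →
    ∃ C : Sym2 V → ℕ, Good G k C := by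
  intro n
  induction n with
  | zero =>
    intro G instG hcard _ _ _
    exact good_of_no_edges (Nat.le_zero.mp hcard)
  | succ n ih =>
    intro G instG hcard hodd hdeg htri
    by_cases hE : G.edgeFinset.card = 0
    · exact good_of_no_edges hE
    · obtain ⟨e, he⟩ := Finset.card_pos.mp (Nat.pos_of_ne_zero hE)
      revert he
      refine Sym2.ind (fun u v he => ?_) e
      have huv : G.Adj u v :=
        (SimpleGraph.mem_edgeSet _).mp (SimpleGraph.mem_edgeFinset.mp he)
      letI instH : DecidableRel (erase G u v).Adj := fun x y =>
        inferInstanceAs (Decidable (G.Adj x y ∧ s(x, y) ≠ s(u, v)))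
      have hHedge : (erase G u v).edgeFinset = G.edgeFinset.erase s(u, v) := by
        ext f
        refine Sym2.ind (fun x y => ?_) f
        simp only [SimpleGraph.mem_edgeFinset, SimpleGraph.mem_edgeSet, Finset.mem_erase]
        constructor
        · exact fun h => ⟨h.2, h.1⟩
        · exact fun h => ⟨h.2, h.1⟩
      have hcardH : (erase G u v).edgeFinset.card ≤ n := by
        rw [hHedge, Finset.card_erase_of_mem he]
        omega
      have hoddH : ∀ x (w : (erase G u v).Walk x x), w.IsCycle → Odd w.length →
          w.length = 3 := by
        intro x w hc ho
        have hsub : ∀ f ∈ w.edges, f ∈ G.edgeSet :=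
          fun f hf => SimpleGraph.edgeSet_mono erase_le (w.edges_subset_edgeSet hf)
        have h3 := hodd x (w.transfer G hsub) (hc.transfer hsub)
          (by rwa [SimpleGraph.Walk.length_transfer])
        rwa [SimpleGraph.Walk.length_transfer] at h3
      have hdegH : ∀ x, (erase G u v).degree x ≤ k := by
        intro x
        refine le_trans (Finset.card_le_card ?_) (hdeg x)
        intro z hz
        rw [SimpleGraph.mem_neighborFinset] at hz ⊢
        exact hz.1
      have htriH : (∃ x y z, (erase G u v).Adj x y ∧ (erase G u v).Adj y z ∧
          (erase G u v).Adj x z) → 3 ≤ k := by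
        rintro ⟨x, y, z, h1, h2, h3⟩
        exact htri ⟨x, y, z, h1.1, h2.1, h3.1⟩
      obtain ⟨C, hC⟩ := ih (erase G u v) hcardH hoddH hdegH htriH
      have hdegu : (erase G u v).degree u < k := by
        have h1 : (erase G u v).degree u = ((G.neighborFinset u).erase v).card := by
          rw [SimpleGraph.degree]; convert congrArg Finset.card (erase_neighborFinset_fst (G := G) (u := u) (v := v))
        rw [h1, Finset.card_erase_of_mem (by rw [SimpleGraph.mem_neighborFinset]; exact huv)]
        have h2 : 0 < G.degree u :=
          Finset.card_pos.mpr ⟨v, by rw [SimpleGraph.mem_neighborFinset]; exact huv⟩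
        have h4 : (G.neighborFinset u).card = G.degree u := rfl
        have := hdeg u
        omega
      have hdegv : (erase G u v).degree v < k := by
        have h1 : (erase G u v).degree v = ((G.neighborFinset v).erase u).card := by
          rw [SimpleGraph.degree]; convert congrArg Finset.card (erase_neighborFinset_snd (G := G) (u := u) (v := v))
        rw [h1, Finset.card_erase_of_mem (by rw [SimpleGraph.mem_neighborFinset]; exact huv.symm)]
        have h2 : 0 < G.degree v :=
          Finset.card_pos.mpr ⟨u, by rw [SimpleGraph.mem_neighborFinset]; exact huv.symm⟩
        have h4 : (G.neighborFinset v).card = G.degree v := rfl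
        have := hdeg v
        omega
      by_cases hcom : ∃ β, β < k ∧ Miss (erase G u v) C u β ∧ Miss (erase G u v) C v β
      · obtain ⟨β, hβ, h1, h2⟩ := hcom
        exact ⟨extendC C u v β, extend_good huv hC hβ h1 h2⟩
      · obtain ⟨a, ha, hMa⟩ := exists_missing (C := C) hdegu
        obtain ⟨b, hb, hMb⟩ := exists_missing (C := C) hdegv
        have hab : a ≠ b := fun h => hcom ⟨a, ha, hMa, h ▸ hMb⟩
        rcases attemptPair hodd huv hC ha hb hab hMa hMb with ⟨C', hC'⟩ |
          ⟨x, hux, hxv, hcb, hca⟩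
        · exact ⟨C', hC'⟩
        · have h3k : 3 ≤ k := htri ⟨u, x, v, hux.1, hxv.1, huv⟩
          obtain ⟨c, hc, hca', hcb'⟩ : ∃ c, c < k ∧ a ≠ c ∧ b ≠ c := by
            have h2le : ({a, b} : Finset ℕ).card ≤ 2 := by
              refine le_trans (Finset.card_insert_le _ _) ?_
              simp
            have hns : ¬ (Finset.range k ⊆ ({a, b} : Finset ℕ)) := fun hsub => by
              have := Finset.card_le_card hsub
              rw [Finset.card_range] at this
              omega
            obtain ⟨c, hc1, hc2⟩ := Finset.not_subset.mp hns
            simp only [Finset.mem_insert, Finset.mem_singleton, not_or] at hc2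
            exact ⟨c, Finset.mem_range.mp hc1, fun h => hc2.1 h.symm,
              fun h => hc2.2 h.symm⟩
          have hnr := noReach hodd huv hC hux hxv hcb hca hMa hab hca' hcb'
          have hnrv : ¬ (chain (erase G u v) C a c).Reachable u v := fun h =>
            hnr (h.trans (SimpleGraph.Adj.reachable
              ⟨hxv.symm, by rw [Sym2.eq_swap]; exact Or.inl hca⟩))
          have hC₂ : Good (erase G u v) k (swapC (erase G u v) C a c u) :=
            swap_good hC ha hc hca'
          have hM2u : Miss (erase G u v) (swapC (erase G u v) C a c u) u c :=
            swap_miss hca' hMa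
          have hM2v : Miss (erase G u v) (swapC (erase G u v) C a c u) v b :=
            fun z hz hcc => hMb hz (by rwa [swap_eq_at hnrv hz] at hcc)
          have hC₂ux : swapC (erase G u v) C a c u s(u, x) = b := by
            rw [swap_eq_of_color hux (by rw [hcb]; exact Ne.symm hab)
              (by rw [hcb]; exact hcb')]
            exact hcb
          have hC₂xv : swapC (erase G u v) C a c u s(x, v) = a := by
            rw [swap_adj hxv, if_neg (fun h => hnr h.2)]
            exact hca
          rcases attemptPair hodd huv hC₂ hc hb (fun h => hcb' h.symm) hM2u hM2v with
            ⟨C', hC'⟩ | ⟨x', hux', hx'v, h1, h2⟩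
          · exact ⟨C', hC'⟩
          · exfalso
            have hxx : x' = x := hC₂.unique hux' hux (h1.trans hC₂ux.symm)
            rw [hxx] at h2
            exact hca' (hC₂xv.symm.trans h2)

end EC


/-- A connected simple graph with no odd cycle of length 5 or more, other than `K₃`,
has chromatic index equal to its maximum degree. -/
theorem no_long_odd_cycle_chromatic_index {V : Type*} [Fintype V] [DecidableEq V]
    (G : SimpleGraph V) [DecidableRel G.Adj]
    (hconn : G.Connected)
    (hodd : ∀ (v : V) (w : G.Walk v v), w.IsCycle → Odd w.length → w.length = 3)
    (hK3 : ¬ Nonempty (G ≃g (⊤ : SimpleGraph (Fin 3)))) :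
    sInf {k : ℕ | ∃ C : G.edgeSet → Fin k,
        ∀ e f : G.edgeSet, e ≠ f →
          (∃ v : V, v ∈ (e : Sym2 V) ∧ v ∈ (f : Sym2 V)) → C e ≠ C f}
      = G.maxDegree := by
  classical
  haveI hne : Nonempty V := hconn.nonempty
  -- any triangle forces maximum degree at least 3
  have htri : (∃ x y z, G.Adj x y ∧ G.Adj y z ∧ G.Adj x z) → 3 ≤ G.maxDegree := by
    rintro ⟨x, y, z, h1, h2, h3⟩
    by_contra hlt
    push_neg at hlt
    have hdeg2 : ∀ w, G.degree w ≤ 2 := fun w =>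
      le_trans (G.degree_le_maxDegree w) (by omega)
    have hyz : y ≠ z := h2.ne
    have hxy : x ≠ y := h1.ne
    have hxz : x ≠ z := h3.ne
    have hpair : ∀ (a b c : V), G.Adj a b → G.Adj a c → b ≠ c →
        G.neighborFinset a = {b, c} := by
      intro a b c hab hac hbc
      have hsub : ({b, c} : Finset V) ⊆ G.neighborFinset a := by
        intro t ht
        rw [SimpleGraph.mem_neighborFinset]
        rcases Finset.mem_insert.mp ht with rfl | ht'
        · exact hab
        · rw [Finset.mem_singleton] at ht'
          subst ht'
          exact hac
      have hcards : ({b, c} : Finset V).card = 2 := Finset.card_pair hbc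
      have hcard2 : (G.neighborFinset a).card ≤ 2 := hdeg2 a
      exact (Finset.eq_of_subset_of_card_le hsub (by omega)).symm
    have hnx : G.neighborFinset x = {y, z} := hpair x y z h1 h3 hyz
    have hny : G.neighborFinset y = {x, z} := hpair y x z h1.symm h2 hxz
    have hnz : G.neighborFinset z = {x, y} := hpair z x y h3.symm h2.symm hxy
    have hmemT : ∀ w, w = x ∨ w = y ∨ w = z := by
      have hstep : ∀ (s t : V) (p : G.Walk s t), (s = x ∨ s = y ∨ s = z) →
          (t = x ∨ t = y ∨ t = z) := by
        intro s t p
        induction p with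
        | nil => exact fun h => h
        | @cons s m t hadj q ih =>
          intro hs
          apply ih
          have hm : m ∈ G.neighborFinset s := by
            rw [SimpleGraph.mem_neighborFinset]
            exact hadj
          rcases hs with rfl | rfl | rfl
          · rw [hnx] at hm
            rcases Finset.mem_insert.mp hm with rfl | hm'
            · exact Or.inr (Or.inl rfl)
            · rw [Finset.mem_singleton] at hm'
              exact Or.inr (Or.inr hm')
          · rw [hny] at hm
            rcases Finset.mem_insert.mp hm with rfl | hm'
            · exact Or.inl rfl
            · rw [Finset.mem_singleton] at hm'
              exact Or.inr (Or.inr hm')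
          · rw [hnz] at hm
            rcases Finset.mem_insert.mp hm with rfl | hm'
            · exact Or.inl rfl
            · rw [Finset.mem_singleton] at hm'
              exact Or.inr (Or.inl hm')
      intro w
      obtain ⟨p⟩ := hconn.preconnected x w
      exact hstep x w p (Or.inl rfl)
    -- build the isomorphism with K₃
    have hyx : y ≠ x := hxy.symm
    have hzx : z ≠ x := hxz.symm
    have hzy : z ≠ y := hyz.symm
    let f : V → Fin 3 := fun w => if w = x then 0 else if w = y then 1 else 2
    let g : Fin 3 → V := ![x, y, z]
    have hfx : f x = 0 := by simp [f]
    have hfy : f y = 1 := by simp [f, hyx]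
    have hfz : f z = 2 := by simp [f, hzx, hzy]
    have hgf : ∀ w, g (f w) = w := by
      intro w
      rcases hmemT w with rfl | rfl | rfl
      · rw [hfx]; simp [g]
      · rw [hfy]; simp [g]
      · rw [hfz]; simp [g]
    have hfg : ∀ i, f (g i) = i := by
      intro i
      fin_cases i
      · show f (![x, y, z] 0) = 0
        simpa [g] using hfx
      · show f (![x, y, z] 1) = 1
        simpa [g] using hfy
      · show f (![x, y, z] 2) = 2
        simpa [g] using hfz
    let e : V ≃ Fin 3 := ⟨f, g, hgf, hfg⟩
    have hiso : G ≃g (⊤ : SimpleGraph (Fin 3)) := by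
      refine ⟨e, ?_⟩
      intro a b
      rw [SimpleGraph.top_adj]
      constructor
      · intro hneq
        rcases hmemT a with rfl | rfl | rfl <;> rcases hmemT b with rfl | rfl | rfl <;>
          first
            | exact absurd rfl hneq
            | exact h1
            | exact h1.symm
            | exact h2
            | exact h2.symm
            | exact h3
            | exact h3.symm
      · intro hadj hfeq
        exact hadj.ne (by rw [← hgf a, ← hgf b]; exact congrArg g hfeq)
    exact hK3 ⟨hiso⟩
  -- the colouring with Δ colours
  obtain ⟨C, hC⟩ := EC.key G.maxDegree G.edgeFinset.card G le_rfl hodd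
    (fun x => G.degree_le_maxDegree x) htri
  have hmem : G.maxDegree ∈ {k : ℕ | ∃ C : G.edgeSet → Fin k,
      ∀ e f : G.edgeSet, e ≠ f →
        (∃ v : V, v ∈ (e : Sym2 V) ∧ v ∈ (f : Sym2 V)) → C e ≠ C f} := by
    have hbound : ∀ e ∈ G.edgeSet, C e < G.maxDegree := by
      intro e
      refine Sym2.ind (fun x y he => ?_) e
      exact hC.1 ((SimpleGraph.mem_edgeSet _).mp he)
    refine ⟨fun e => ⟨C e.1, hbound e.1 e.2⟩, ?_⟩
    rintro e f hef ⟨w, hwe, hwf⟩ hCC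
    obtain ⟨y, hey⟩ := Sym2.mem_iff_exists.mp hwe
    obtain ⟨z, hfz⟩ := Sym2.mem_iff_exists.mp hwf
    have hyz : y ≠ z := by
      intro h
      exact hef (Subtype.ext (hey.trans (h ▸ hfz.symm)))
    have hadjy : G.Adj w y := (SimpleGraph.mem_edgeSet _).mp (hey ▸ e.2)
    have hadjz : G.Adj w z := (SimpleGraph.mem_edgeSet _).mp (hfz ▸ f.2)
    have hval : C e.1 = C f.1 := congrArg Fin.val hCC
    rw [hey, hfz] at hval
    exact hC.2 hadjy hadjz hyz hval
  refine le_antisymm (Nat.sInf_le hmem) (le_csInf ⟨G.maxDegree, hmem⟩ ?_)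
  rintro j ⟨C', hC'⟩
  obtain ⟨w, hw⟩ := G.exists_maximal_degree_vertex
  have hinj : Function.Injective
      (fun z : G.neighborSet w => C' ⟨s(w, z.1), (SimpleGraph.mem_edgeSet _).mpr z.2⟩) := by
    intro z1 z2 hzz
    by_contra hne2
    have hne3 : z1.1 ≠ z2.1 := fun h => hne2 (Subtype.ext h)
    refine hC' _ _ ?_ ⟨w, ?_, ?_⟩ hzz
    · intro h
      exact hne3 (Sym2.congr_right.mp (congrArg Subtype.val h))
    · exact Sym2.mem_mk_left _ _
    · exact Sym2.mem_mk_left _ _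
  have hcard := Fintype.card_le_of_injective _ hinj
  rw [Fintype.card_fin, SimpleGraph.card_neighborSet_eq_degree] at hcard
  omega
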